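/- Let F₁ and F₂ be marked graphs and let G be a graph such that G is not F₁-free and not F₂-free. Then there exists a marked graph F which is a (not necessarily disjoint) union of F₁ and F₂ such that G is not F-free. -/
import Mathlib


/-- The set of vertices at distance at most `r` from `v` in `G`. -/
def ballSet {V : Type*} (G : SimpleGraph V) (r : ℕ) (v : V) : Set V :=
  {u | G.dist v u ≤ r}

lemma center_mem_ballSet {V : Type*} (G : SimpleGraph V) (r : ℕ) (v : V) :
    v ∈ ballSet G r v := by
  simp [ballSet, SimpleGraph.dist_self]

/-- The `r`-ball of `v` in `G`: the subgraph induced on the vertices at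
distance at most `r` from `v`. -/
def ballGraph {V : Type*} (G : SimpleGraph V) (r : ℕ) (v : V) :
    SimpleGraph (ballSet G r v) :=
  G.induce (ballSet G r v)

/-- Isomorphism of pointed graphs. -/
def PtdIso {V W : Type*} (G : SimpleGraph V) (v : V) (H : SimpleGraph W) (w : W) : Prop :=
  ∃ e : G ≃g H, e v = w

/-- The `r`-ball of `v` in `G` has the `r`-type represented by the pointed graph `(H, c)`. -/
def BallType {V W : Type*} (G : SimpleGraph V) (r : ℕ) (v : V)
    (H : SimpleGraph W) (c : W) : Prop :=
  PtdIso (ballGraph G r v) ⟨v, center_mem_ballSet G r v⟩ H c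

/-- Vertex markings of a marked graph. -/
inductive Mark where
  | full
  | semifull
  | part
deriving DecidableEq

/-- A marked graph: a graph together with a marking of each vertex as
'full', 'semifull' or 'partial'. -/
structure MarkedGraph (V : Type*) where
  graph : SimpleGraph V
  mark : V → Mark

/-- The closed neighbourhood `N₁(v) = {v} ∪ N(v)`. -/
def closedNbhd {V : Type*} (G : SimpleGraph V) (v : V) : Set V :=
  insert v (G.neighborSet v)

/-- An embedding of a marked graph `F` into a graph `G` (Definition 2.1). -/
def IsMarkedEmbedding {V W : Type*} (F : MarkedGraph V) (G : SimpleGraph W)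
    (f : V → W) : Prop :=
  Function.Injective f ∧ ∀ v : V,
    (F.mark v = Mark.full → closedNbhd G (f v) = f '' closedNbhd F.graph v) ∧
    (F.mark v = Mark.semifull →
      closedNbhd G (f v) ∩ Set.range f = f '' closedNbhd F.graph v) ∧
    (F.mark v = Mark.part → f '' closedNbhd F.graph v ⊆ closedNbhd G (f v))

/-- `F` is a (not necessarily disjoint) union of the marked graphs `F₁` and `F₂`:
there are embeddings of `F₁`, `F₂` into the graph of `F` (ignoring `F`'s markings)
whose images cover `F`, a vertex is 'full' iff it is the image of a full vertex,
and 'semifull' iff it is not full but the image of a semifull vertex (and hence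
'partial' otherwise). -/
def IsMarkedUnion {U V₁ V₂ : Type*} (F : MarkedGraph U)
    (F₁ : MarkedGraph V₁) (F₂ : MarkedGraph V₂) : Prop :=
  ∃ (f₁ : V₁ → U) (f₂ : V₂ → U),
    IsMarkedEmbedding F₁ F.graph f₁ ∧ IsMarkedEmbedding F₂ F.graph f₂ ∧
    (∀ u : U, u ∈ Set.range f₁ ∪ Set.range f₂) ∧
    (∀ u : U, F.mark u = Mark.full ↔
      ((∃ w, f₁ w = u ∧ F₁.mark w = Mark.full) ∨
       (∃ w, f₂ w = u ∧ F₂.mark w = Mark.full))) ∧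
    (∀ u : U, F.mark u = Mark.semifull ↔
      (¬ ((∃ w, f₁ w = u ∧ F₁.mark w = Mark.full) ∨
          (∃ w, f₂ w = u ∧ F₂.mark w = Mark.full)) ∧
       ((∃ w, f₁ w = u ∧ F₁.mark w = Mark.semifull) ∨
        (∃ w, f₂ w = u ∧ F₂.mark w = Mark.semifull))))

/-- if `G` is neither `F₁`-free nor `F₂`-free, then some union `F`
of `F₁` and `F₂` embeds into `G`. -/
theorem stmt8 {V V₁ V₂ : Type} (G : SimpleGraph V)
    (F₁ : MarkedGraph V₁) (F₂ : MarkedGraph V₂) (g₁ : V₁ → V) (g₂ : V₂ → V)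
    (h₁ : IsMarkedEmbedding F₁ G g₁) (h₂ : IsMarkedEmbedding F₂ G g₂) :
    ∃ (U : Type) (F : MarkedGraph U), IsMarkedUnion F F₁ F₂ ∧
      ∃ g : U → V, IsMarkedEmbedding F G g := by
  
  classical
  obtain ⟨hinj₁, hmk₁⟩ := h₁
  obtain ⟨hinj₂, hmk₂⟩ := h₂
  set S : Set V := Set.range g₁ ∪ Set.range g₂ with hS
  let FG : SimpleGraph S := G.comap Subtype.val
  let P : S → Prop := fun u =>
    (∃ w, g₁ w = u.1 ∧ F₁.mark w = Mark.full) ∨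
    (∃ w, g₂ w = u.1 ∧ F₂.mark w = Mark.full)
  let Q : S → Prop := fun u =>
    (∃ w, g₁ w = u.1 ∧ F₁.mark w = Mark.semifull) ∨
    (∃ w, g₂ w = u.1 ∧ F₂.mark w = Mark.semifull)
  let mk : S → Mark := fun u =>
    if P u then Mark.full else if Q u then Mark.semifull else Mark.part
  have key : ∀ (u x : S), x ∈ closedNbhd FG u ↔ x.1 ∈ closedNbhd G u.1 := by
    intro u x
    simp only [closedNbhd, Set.mem_insert_iff, SimpleGraph.mem_neighborSet]
    constructor
    · rintro (rfl | hadj)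
      · exact Or.inl rfl
      · exact Or.inr hadj
    · rintro (h | hadj)
      · exact Or.inl (Subtype.ext h)
      · exact Or.inr hadj
  let f₁ : V₁ → S := fun w => ⟨g₁ w, Or.inl ⟨w, rfl⟩⟩
  let f₂ : V₂ → S := fun w => ⟨g₂ w, Or.inr ⟨w, rfl⟩⟩
  have himg₁ : ∀ (A : Set V₁) (x : S), x ∈ f₁ '' A ↔ x.1 ∈ g₁ '' A := by
    intro A x
    constructor
    · rintro ⟨y, hy, rfl⟩; exact ⟨y, hy, rfl⟩
    · rintro ⟨y, hy, hxy⟩; exact ⟨y, hy, Subtype.ext hxy⟩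
  have himg₂ : ∀ (A : Set V₂) (x : S), x ∈ f₂ '' A ↔ x.1 ∈ g₂ '' A := by
    intro A x
    constructor
    · rintro ⟨y, hy, rfl⟩; exact ⟨y, hy, rfl⟩
    · rintro ⟨y, hy, hxy⟩; exact ⟨y, hy, Subtype.ext hxy⟩
  have hrng₁ : ∀ x : S, x ∈ Set.range f₁ ↔ x.1 ∈ Set.range g₁ := by
    intro x
    constructor
    · rintro ⟨y, rfl⟩; exact ⟨y, rfl⟩
    · rintro ⟨y, hy⟩; exact ⟨y, Subtype.ext hy⟩
  have hrng₂ : ∀ x : S, x ∈ Set.range f₂ ↔ x.1 ∈ Set.range g₂ := by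
    intro x
    constructor
    · rintro ⟨y, rfl⟩; exact ⟨y, rfl⟩
    · rintro ⟨y, hy⟩; exact ⟨y, Subtype.ext hy⟩
  have hemb₁ : IsMarkedEmbedding F₁ FG f₁ := by
    refine ⟨fun a b h => hinj₁ (congrArg Subtype.val h), fun v => ⟨?_, ?_, ?_⟩⟩
    · intro hv
      ext x
      rw [key, (hmk₁ v).1 hv, himg₁]
    · intro hv
      ext x
      rw [Set.mem_inter_iff, key, hrng₁, himg₁, ← Set.mem_inter_iff,
        (hmk₁ v).2.1 hv]
    · intro hv
      rintro x ⟨y, hy, rfl⟩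
      exact (key _ _).2 (((hmk₁ v).2.2 hv) ⟨y, hy, rfl⟩)
  have hemb₂ : IsMarkedEmbedding F₂ FG f₂ := by
    refine ⟨fun a b h => hinj₂ (congrArg Subtype.val h), fun v => ⟨?_, ?_, ?_⟩⟩
    · intro hv
      ext x
      rw [key, (hmk₂ v).1 hv, himg₂]
    · intro hv
      ext x
      rw [Set.mem_inter_iff, key, hrng₂, himg₂, ← Set.mem_inter_iff,
        (hmk₂ v).2.1 hv]
    · intro hv
      rintro x ⟨y, hy, rfl⟩
      exact (key _ _).2 (((hmk₂ v).2.2 hv) ⟨y, hy, rfl⟩)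
  have hPiff : ∀ u : S,
      (((∃ w, f₁ w = u ∧ F₁.mark w = Mark.full) ∨
        (∃ w, f₂ w = u ∧ F₂.mark w = Mark.full)) ↔ P u) := by
    intro u
    constructor
    · rintro (⟨w, hw, hm⟩ | ⟨w, hw, hm⟩)
      · exact Or.inl ⟨w, congrArg Subtype.val hw, hm⟩
      · exact Or.inr ⟨w, congrArg Subtype.val hw, hm⟩
    · rintro (⟨w, hw, hm⟩ | ⟨w, hw, hm⟩)
      · exact Or.inl ⟨w, Subtype.ext hw, hm⟩
      · exact Or.inr ⟨w, Subtype.ext hw, hm⟩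
  have hQiff : ∀ u : S,
      (((∃ w, f₁ w = u ∧ F₁.mark w = Mark.semifull) ∨
        (∃ w, f₂ w = u ∧ F₂.mark w = Mark.semifull)) ↔ Q u) := by
    intro u
    constructor
    · rintro (⟨w, hw, hm⟩ | ⟨w, hw, hm⟩)
      · exact Or.inl ⟨w, congrArg Subtype.val hw, hm⟩
      · exact Or.inr ⟨w, congrArg Subtype.val hw, hm⟩
    · rintro (⟨w, hw, hm⟩ | ⟨w, hw, hm⟩)
      · exact Or.inl ⟨w, Subtype.ext hw, hm⟩
      · exact Or.inr ⟨w, Subtype.ext hw, hm⟩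
  refine ⟨S, ⟨FG, mk⟩, ⟨f₁, f₂, hemb₁, hemb₂, ?_, ?_, ?_⟩, Subtype.val, ?_, ?_⟩
  · intro u
    rcases u.2 with ⟨w, hw⟩ | ⟨w, hw⟩
    · exact Or.inl ⟨w, Subtype.ext hw⟩
    · exact Or.inr ⟨w, Subtype.ext hw⟩
  · intro u
    rw [hPiff u]
    by_cases hP : P u
    · simp [mk, hP]
    · by_cases hQ : Q u <;> simp [mk, hP, hQ]
  · intro u
    rw [hPiff u, hQiff u]
    by_cases hP : P u
    · simp [mk, hP]
    · by_cases hQ : Q u <;> simp [mk, hP, hQ]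
  · exact Subtype.val_injective
  · intro u
    refine ⟨?_, ?_, ?_⟩
    · intro hu
      have hPu : P u := by
        by_contra hc
        simp only [mk, if_neg hc] at hu
        split_ifs at hu
      have hsub : closedNbhd G u.1 ⊆ S := by
        rcases hPu with ⟨w, hw, hm⟩ | ⟨w, hw, hm⟩
        · intro x hx
          rw [← hw] at hx
          rw [(hmk₁ w).1 hm] at hx
          rcases hx with ⟨y, _, rfl⟩
          exact Or.inl ⟨y, rfl⟩
        · intro x hx
          rw [← hw] at hx
          rw [(hmk₂ w).1 hm] at hx
          rcases hx with ⟨y, _, rfl⟩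
          exact Or.inr ⟨y, rfl⟩
      ext x
      constructor
      · intro hx
        exact ⟨⟨x, hsub hx⟩, (key u ⟨x, hsub hx⟩).2 hx, rfl⟩
      · rintro ⟨y, hy, rfl⟩
        exact (key u y).1 hy
    · intro _
      ext x
      constructor
      · rintro ⟨hx1, y, rfl⟩
        exact ⟨y, (key u y).2 hx1, rfl⟩
      · rintro ⟨y, hy, rfl⟩
        exact ⟨(key u y).1 hy, ⟨y, rfl⟩⟩
    · intro _
      rintro x ⟨y, hy, rfl⟩
      exact (key u y).1 hy
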